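/- Let w ∈ A_1 and let M be the Hardy–Littlewood maximal operator. Then there exists a constant C > 0, independent of f, a, and r, such that for every a ∈ ℝⁿ, r > 0, and f ∈ L^{1,w}_loc: ‖Mf‖_{WL^{1,w}(B(a,r))} ≤ C·w(B(a,r))·∫_r^∞ w(B(a,s))^{-1} ‖f‖_{L^{1,w}(B(a,s))} ds/s. -/

import Mathlib

open MeasureTheory Metric Set
open scoped ENNReal

noncomputable section

/-- The weighted measure of a set: `w(E) = ∫_E w(x) dx`, valued in `ℝ≥0∞`. -/
def wSet {n : ℕ} (w : EuclideanSpace ℝ (Fin n) → ℝ)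
    (E : Set (EuclideanSpace ℝ (Fin n))) : ℝ≥0∞ :=
  ∫⁻ x in E, ENNReal.ofReal (w x)

/-- The weighted Lebesgue norm `‖f‖_{L^{p,w}(Ω)} = (∫_Ω |f(x)|^p w(x) dx)^{1/p}`. -/
def wLp {n : ℕ} (p : ℝ) (w f : EuclideanSpace ℝ (Fin n) → ℝ)
    (Ω : Set (EuclideanSpace ℝ (Fin n))) : ℝ≥0∞ :=
  (∫⁻ x in Ω, ENNReal.ofReal |f x| ^ p * ENNReal.ofReal (w x)) ^ (1 / p)

/-- The weighted Lebesgue norm for an `ℝ≥0∞`-valued function. -/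
def wLpE {n : ℕ} (p : ℝ) (w : EuclideanSpace ℝ (Fin n) → ℝ)
    (g : EuclideanSpace ℝ (Fin n) → ℝ≥0∞) (Ω : Set (EuclideanSpace ℝ (Fin n))) : ℝ≥0∞ :=
  (∫⁻ x in Ω, g x ^ p * ENNReal.ofReal (w x)) ^ (1 / p)

/-- The weak weighted Lebesgue norm `‖f‖_{WL^{p,w}(Ω)} = sup_{γ>0} γ·w({x ∈ Ω : |f(x)| > γ})^{1/p}`. -/
def wWeakLp {n : ℕ} (p : ℝ) (w f : EuclideanSpace ℝ (Fin n) → ℝ)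
    (Ω : Set (EuclideanSpace ℝ (Fin n))) : ℝ≥0∞ :=
  ⨆ γ : Set.Ioi (0 : ℝ),
    ENNReal.ofReal γ.1 * (wSet w {x | x ∈ Ω ∧ γ.1 < |f x|}) ^ (1 / p)

/-- The weak weighted Lebesgue norm for an `ℝ≥0∞`-valued function. -/
def wWeakLpE {n : ℕ} (p : ℝ) (w : EuclideanSpace ℝ (Fin n) → ℝ)
    (g : EuclideanSpace ℝ (Fin n) → ℝ≥0∞) (Ω : Set (EuclideanSpace ℝ (Fin n))) : ℝ≥0∞ :=
  ⨆ γ : Set.Ioi (0 : ℝ),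
    ENNReal.ofReal γ.1 * (wSet w {x | x ∈ Ω ∧ ENNReal.ofReal γ.1 < g x}) ^ (1 / p)

/-- `f ∈ L^{p,w}_loc`: `f` is measurable and `‖f‖_{L^{p,w}(B)} < ∞` on every ball. -/
def MemLocWLp {n : ℕ} (p : ℝ) (w f : EuclideanSpace ℝ (Fin n) → ℝ) : Prop :=
  Measurable f ∧ ∀ (a : EuclideanSpace ℝ (Fin n)) (r : ℝ), 0 < r → wLp p w f (ball a r) < ⊤

/-- A weight: nonnegative, measurable, locally integrable, positive a.e. -/
def IsWeight {n : ℕ} (w : EuclideanSpace ℝ (Fin n) → ℝ) : Prop :=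
  Measurable w ∧ (∀ x, 0 ≤ w x) ∧ LocallyIntegrable w volume ∧ ∀ᵐ x ∂volume, 0 < w x

/-- The Muckenhoupt class `A_p` for `1 < p`. -/
def MuckAp {n : ℕ} (p : ℝ) (w : EuclideanSpace ℝ (Fin n) → ℝ) : Prop :=
  ∃ C : ℝ, 0 < C ∧ ∀ (a : EuclideanSpace ℝ (Fin n)) (r : ℝ), 0 < r →
    ((volume (ball a r))⁻¹ * ∫⁻ x in ball a r, ENNReal.ofReal (w x)) *
      ((volume (ball a r))⁻¹ *
        ∫⁻ x in ball a r, ENNReal.ofReal (w x ^ (-(1 / (p - 1))))) ^ (p - 1) ≤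
      ENNReal.ofReal C

/-- The Muckenhoupt class `A_1`. -/
def MuckA1 {n : ℕ} (w : EuclideanSpace ℝ (Fin n) → ℝ) : Prop :=
  ∃ C : ℝ, 0 < C ∧ ∀ (a : EuclideanSpace ℝ (Fin n)) (r : ℝ), 0 < r →
    ((volume (ball a r))⁻¹ * ∫⁻ x in ball a r, ENNReal.ofReal (w x)) *
      essSup (fun x => ENNReal.ofReal (w x)⁻¹) (volume.restrict (ball a r)) ≤
      ENNReal.ofReal C

/-- The class `A_{p,q}` for `1 < p`, where `p'` is the conjugate exponent of `p`. -/
def MuckApq {n : ℕ} (p q p' : ℝ) (w : EuclideanSpace ℝ (Fin n) → ℝ) : Prop :=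
  ∃ C : ℝ, 0 < C ∧ ∀ (a : EuclideanSpace ℝ (Fin n)) (r : ℝ), 0 < r →
    ((volume (ball a r))⁻¹ * ∫⁻ x in ball a r, ENNReal.ofReal (w x ^ q)) ^ (1 / q) *
      ((volume (ball a r))⁻¹ * ∫⁻ x in ball a r, ENNReal.ofReal (w x ^ (-p'))) ^ (1 / p') ≤
      ENNReal.ofReal C

/-- The class `A_{1,q}`. -/
def MuckA1q {n : ℕ} (q : ℝ) (w : EuclideanSpace ℝ (Fin n) → ℝ) : Prop :=
  ∃ C : ℝ, 0 < C ∧ ∀ (a : EuclideanSpace ℝ (Fin n)) (r : ℝ), 0 < r →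
    ((volume (ball a r))⁻¹ * ∫⁻ x in ball a r, ENNReal.ofReal (w x ^ q)) ^ (1 / q) *
      essSup (fun x => ENNReal.ofReal (w x)⁻¹) (volume.restrict (ball a r)) ≤
      ENNReal.ofReal C

/-- The Hardy–Littlewood maximal operator. -/
def HLMax {n : ℕ} (f : EuclideanSpace ℝ (Fin n) → ℝ)
    (x : EuclideanSpace ℝ (Fin n)) : ℝ≥0∞ :=
  ⨆ r : Set.Ioi (0 : ℝ), (volume (ball x r.1))⁻¹ * ∫⁻ y in ball x r.1, ENNReal.ofReal |f y|

/-- The fractional integral operator `I_α` (applied to `|f|`, valued in `ℝ≥0∞`). -/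
def fracIntE {n : ℕ} (α : ℝ) (f : EuclideanSpace ℝ (Fin n) → ℝ)
    (x : EuclideanSpace ℝ (Fin n)) : ℝ≥0∞ :=
  ∫⁻ y, ENNReal.ofReal |f y| / ENNReal.ofReal (dist x y ^ ((n : ℝ) - α))

/-- The fractional maximal operator `M_α`. -/
def fracMax {n : ℕ} (α : ℝ) (f : EuclideanSpace ℝ (Fin n) → ℝ)
    (x : EuclideanSpace ℝ (Fin n)) : ℝ≥0∞ :=
  ⨆ r : Set.Ioi (0 : ℝ),
    (volume (ball x r.1)) ^ (α / (n : ℝ) - 1) * ∫⁻ y in ball x r.1, ENNReal.ofReal |f y|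

/-- The generalized weighted Morrey norm `‖f‖_{M^{p,w}_ψ}`. -/
def morreyNorm {n : ℕ} (p : ℝ) (w : EuclideanSpace ℝ (Fin n) → ℝ)
    (ψ : EuclideanSpace ℝ (Fin n) → ℝ → ℝ) (f : EuclideanSpace ℝ (Fin n) → ℝ) : ℝ≥0∞ :=
  ⨆ (a : EuclideanSpace ℝ (Fin n)) (r : Set.Ioi (0 : ℝ)),
    (ENNReal.ofReal (ψ a r.1))⁻¹ * wSet w (ball a r.1) ^ (-(1 / p)) * wLp p w f (ball a r.1)

/-- The generalized weighted Morrey norm for an `ℝ≥0∞`-valued function. -/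
def morreyNormE {n : ℕ} (p : ℝ) (w : EuclideanSpace ℝ (Fin n) → ℝ)
    (ψ : EuclideanSpace ℝ (Fin n) → ℝ → ℝ) (g : EuclideanSpace ℝ (Fin n) → ℝ≥0∞) : ℝ≥0∞ :=
  ⨆ (a : EuclideanSpace ℝ (Fin n)) (r : Set.Ioi (0 : ℝ)),
    (ENNReal.ofReal (ψ a r.1))⁻¹ * wSet w (ball a r.1) ^ (-(1 / p)) * wLpE p w g (ball a r.1)

/-- The generalized weighted weak Morrey norm `‖f‖_{WM^{p,w}_ψ}`. -/
def morreyWeakNorm {n : ℕ} (p : ℝ) (w : EuclideanSpace ℝ (Fin n) → ℝ)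
    (ψ : EuclideanSpace ℝ (Fin n) → ℝ → ℝ) (f : EuclideanSpace ℝ (Fin n) → ℝ) : ℝ≥0∞ :=
  ⨆ (a : EuclideanSpace ℝ (Fin n)) (r : Set.Ioi (0 : ℝ)),
    (ENNReal.ofReal (ψ a r.1))⁻¹ * wSet w (ball a r.1) ^ (-(1 / p)) * wWeakLp p w f (ball a r.1)

/-- The generalized weighted weak Morrey norm for an `ℝ≥0∞`-valued function. -/
def morreyWeakNormE {n : ℕ} (p : ℝ) (w : EuclideanSpace ℝ (Fin n) → ℝ)
    (ψ : EuclideanSpace ℝ (Fin n) → ℝ → ℝ) (g : EuclideanSpace ℝ (Fin n) → ℝ≥0∞) : ℝ≥0∞ :=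
  ⨆ (a : EuclideanSpace ℝ (Fin n)) (r : Set.Ioi (0 : ℝ)),
    (ENNReal.ofReal (ψ a r.1))⁻¹ * wSet w (ball a r.1) ^ (-(1 / p)) * wWeakLpE p w g (ball a r.1)

end


section Helpers

open ENNReal

variable {n : ℕ}

private lemma aux_inv_le {x y c : ℝ≥0∞} (hc0 : c ≠ 0) (hct : c ≠ ⊤) (h : x ≤ c * y) :
    y⁻¹ ≤ c * x⁻¹ := by
  have h1 : (c * y)⁻¹ ≤ x⁻¹ := ENNReal.inv_le_inv.2 h
  calc y⁻¹ = c * (c⁻¹ * y⁻¹) := by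
        rw [← mul_assoc, ENNReal.mul_inv_cancel hc0 hct, one_mul]
    _ = c * (c * y)⁻¹ := by rw [ENNReal.mul_inv (Or.inl hc0) (Or.inl hct)]
    _ ≤ c * x⁻¹ := by exact mul_le_mul_right h1 c

private lemma wSet_mono (w : EuclideanSpace ℝ (Fin n) → ℝ)
    {s t : Set (EuclideanSpace ℝ (Fin n))} (h : s ⊆ t) : wSet w s ≤ wSet w t :=
  lintegral_mono_set h

private lemma wSet_ball_pos (w : EuclideanSpace ℝ (Fin n) → ℝ) (hw : IsWeight w)
    (a : EuclideanSpace ℝ (Fin n)) {r : ℝ} (hr : 0 < r) : 0 < wSet w (ball a r) := by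
  rw [wSet, pos_iff_ne_zero]
  intro h0
  rw [lintegral_eq_zero_iff (by exact (measurable_coe_nnreal_ennreal.comp
    (hw.1.real_toNNReal)))] at h0
  have h1 : ∀ᵐ x ∂(volume.restrict (ball a r)), 0 < w x := ae_restrict_of_ae hw.2.2.2
  have h2 : ∀ᵐ x ∂(volume.restrict (ball a r)), False := by
    filter_upwards [h0, h1] with x hx hx'
    have : ENNReal.ofReal (w x) = 0 := hx
    rw [ENNReal.ofReal_eq_zero] at this
    exact absurd this (not_le.2 hx')
  have := (ae_iff.1 h2)
  simp only [not_false_iff, setOf_true] at this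
  rw [Measure.restrict_apply_univ] at this
  exact (measure_ball_pos volume a hr).ne' this

private lemma wSet_ball_ne_top (w : EuclideanSpace ℝ (Fin n) → ℝ) (hw : IsWeight w)
    (a : EuclideanSpace ℝ (Fin n)) (r : ℝ) : wSet w (ball a r) ≠ ⊤ := by
  have hcb : IntegrableOn w (closedBall a r) volume :=
    hw.2.2.1.integrableOn_isCompact (isCompact_closedBall a r)
  have hb : IntegrableOn w (ball a r) volume := hcb.mono_set ball_subset_closedBall
  have := hb.2
  rw [hasFiniteIntegral_iff_norm] at this
  refine ne_of_lt (lt_of_le_of_lt ?_ this)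
  apply lintegral_mono
  intro x
  exact ENNReal.ofReal_le_ofReal (le_abs_self _)

private lemma wLp_one (w f : EuclideanSpace ℝ (Fin n) → ℝ)
    (Ω : Set (EuclideanSpace ℝ (Fin n))) :
    wLp 1 w f Ω = ∫⁻ x in Ω, ENNReal.ofReal |f x| * ENNReal.ofReal (w x) := by
  simp [wLp]

end Helpers

section Key

open ENNReal

variable {n : ℕ}

/-- Key A₁ estimate in multiplicative form:
`(∫_B g) · w(B) ≤ C₀ · |B| · ∫_B g·w` for any ball `B` and any `g : E → ℝ≥0∞`. -/
private lemma key_est (w : EuclideanSpace ℝ (Fin n) → ℝ) (hw : IsWeight w) {C₀ : ℝ}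
    (hA : ∀ (a : EuclideanSpace ℝ (Fin n)) (r : ℝ), 0 < r →
      ((volume (ball a r))⁻¹ * ∫⁻ x in ball a r, ENNReal.ofReal (w x)) *
        essSup (fun x => ENNReal.ofReal (w x)⁻¹) (volume.restrict (ball a r)) ≤
        ENNReal.ofReal C₀)
    (x : EuclideanSpace ℝ (Fin n)) {t : ℝ} (ht : 0 < t) (g : EuclideanSpace ℝ (Fin n) → ℝ≥0∞) :
    (∫⁻ y in ball x t, g y) * wSet w (ball x t) ≤
      ENNReal.ofReal C₀ * volume (ball x t) * ∫⁻ y in ball x t, g y * ENNReal.ofReal (w y) := by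
  set B := ball x t
  set S := essSup (fun y => ENNReal.ofReal (w y)⁻¹) (volume.restrict B) with hS
  have hvol0 : volume B ≠ 0 := (measure_ball_pos volume x ht).ne'
  have hvolt : volume B ≠ ⊤ := measure_ball_lt_top.ne
  have hw0 : wSet w B ≠ 0 := (wSet_ball_pos w hw x ht).ne'
  have hA' := hA x t ht
  -- `wSet w B * S ≤ C₀ * vol B`
  have hws : wSet w B * S ≤ ENNReal.ofReal C₀ * volume B := by
    have := mul_le_mul_left hA' (volume B)
    calc wSet w B * S = ((volume B)⁻¹ * wSet w B * S) * volume B := by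
          rw [mul_comm ((volume B)⁻¹) (wSet w B), mul_assoc, mul_assoc,
            mul_comm S (volume B), ← mul_assoc (volume B)⁻¹,
            mul_comm ((volume B)⁻¹) (volume B), ENNReal.mul_inv_cancel hvol0 hvolt, one_mul]
      _ ≤ ENNReal.ofReal C₀ * volume B := this
  have hSt : S ≠ ⊤ := by
    intro hst
    rw [hst, mul_top hw0] at hws
    exact (lt_of_le_of_lt hws (by
      exact ENNReal.mul_lt_top ENNReal.ofReal_lt_top measure_ball_lt_top)).ne rfl
  -- pointwise a.e. bound : g ≤ g * w * S on B
  have hae : ∀ᵐ y ∂(volume.restrict B), g y ≤ g y * ENNReal.ofReal (w y) * S := by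
    have h1 : ∀ᵐ y ∂(volume.restrict B), ENNReal.ofReal (w y)⁻¹ ≤ S := ENNReal.ae_le_essSup _
    have h2 : ∀ᵐ y ∂(volume.restrict B), 0 < w y := ae_restrict_of_ae hw.2.2.2
    filter_upwards [h1, h2] with y hy hy'
    have hne0 : ENNReal.ofReal (w y) ≠ 0 := (ENNReal.ofReal_pos.2 hy').ne'
    calc g y = g y * (ENNReal.ofReal (w y) * (ENNReal.ofReal (w y))⁻¹) := by
          rw [ENNReal.mul_inv_cancel hne0 ENNReal.ofReal_ne_top, mul_one]
      _ = g y * ENNReal.ofReal (w y) * (ENNReal.ofReal (w y))⁻¹ := by ring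
      _ = g y * ENNReal.ofReal (w y) * ENNReal.ofReal (w y)⁻¹ := by
          rw [ENNReal.ofReal_inv_of_pos hy']
      _ ≤ g y * ENNReal.ofReal (w y) * S := mul_le_mul_right hy _
  have hint : (∫⁻ y in B, g y) ≤ (∫⁻ y in B, g y * ENNReal.ofReal (w y)) * S := by
    calc (∫⁻ y in B, g y) ≤ ∫⁻ y in B, g y * ENNReal.ofReal (w y) * S := lintegral_mono_ae hae
      _ = (∫⁻ y in B, g y * ENNReal.ofReal (w y)) * S := lintegral_mul_const' S _ hSt
  calc (∫⁻ y in B, g y) * wSet w B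
      ≤ (∫⁻ y in B, g y * ENNReal.ofReal (w y)) * S * wSet w B := mul_le_mul_left hint _
    _ = (∫⁻ y in B, g y * ENNReal.ofReal (w y)) * (wSet w B * S) := by ring
    _ ≤ (∫⁻ y in B, g y * ENNReal.ofReal (w y)) * (ENNReal.ofReal C₀ * volume B) :=
        mul_le_mul_right hws _
    _ = ENNReal.ofReal C₀ * volume B * ∫⁻ y in B, g y * ENNReal.ofReal (w y) := by ring

/-- Doubling-type estimate: if `ball x t ⊆ B'` with `B'` a ball, then
`|B(x,t)| · w(B') ≤ C₀ · |B'| · w(B(x,t))`. -/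
private lemma double_est (w : EuclideanSpace ℝ (Fin n) → ℝ) (hw : IsWeight w) {C₀ : ℝ}
    (hA : ∀ (a : EuclideanSpace ℝ (Fin n)) (r : ℝ), 0 < r →
      ((volume (ball a r))⁻¹ * ∫⁻ x in ball a r, ENNReal.ofReal (w x)) *
        essSup (fun x => ENNReal.ofReal (w x)⁻¹) (volume.restrict (ball a r)) ≤
        ENNReal.ofReal C₀)
    {x a' : EuclideanSpace ℝ (Fin n)} {t R : ℝ} (ht : 0 < t) (hR : 0 < R)
    (hsub : ball x t ⊆ ball a' R) :
    volume (ball x t) * wSet w (ball a' R) ≤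
      ENNReal.ofReal C₀ * volume (ball a' R) * wSet w (ball x t) := by
  have h := key_est w hw hA a' hR ((ball x t).indicator (fun _ => (1 : ℝ≥0∞)))
  have h1 : (∫⁻ y in ball a' R, (ball x t).indicator (fun _ => (1 : ℝ≥0∞)) y) =
      volume (ball x t) := by
    rw [lintegral_indicator measurableSet_ball, setLIntegral_one,
      Measure.restrict_apply measurableSet_ball, inter_eq_self_of_subset_left hsub]
  have h2 : (∫⁻ y in ball a' R, (ball x t).indicator (fun _ => (1 : ℝ≥0∞)) y *
      ENNReal.ofReal (w y)) = wSet w (ball x t) := by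
    have : ∀ y, (ball x t).indicator (fun _ => (1 : ℝ≥0∞)) y * ENNReal.ofReal (w y) =
        (ball x t).indicator (fun z => ENNReal.ofReal (w z)) y := by
      intro y
      by_cases hy : y ∈ ball x t <;> simp [Set.indicator_apply, hy]
    simp_rw [this]
    rw [lintegral_indicator measurableSet_ball, wSet,
      Measure.restrict_restrict measurableSet_ball, inter_eq_self_of_subset_left hsub]
  rw [h1, h2] at h
  exact h

end Key

section Doubling

open ENNReal

variable {n : ℕ}

private lemma vol_ball_scale (hn : n ≠ 0) (a x : EuclideanSpace ℝ (Fin n)) {c : ℝ} (t : ℝ)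
    (hc : 0 ≤ c) :
    volume (ball a (c * t)) = ENNReal.ofReal c ^ n * volume (ball x t) := by
  haveI : Nonempty (Fin n) := ⟨⟨0, Nat.pos_of_ne_zero hn⟩⟩
  rw [EuclideanSpace.volume_ball, EuclideanSpace.volume_ball, Fintype.card_fin,
    ENNReal.ofReal_mul hc, mul_pow, mul_assoc]

/-- If `ball x t ⊆ ball a' (c·t)`, then `w(ball a' (c·t)) ≤ C₀·cⁿ · w(ball x t)`. -/
private lemma double_scaled (hn : n ≠ 0) (w : EuclideanSpace ℝ (Fin n) → ℝ) (hw : IsWeight w)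
    {C₀ : ℝ} (hC₀ : 0 < C₀)
    (hA : ∀ (a : EuclideanSpace ℝ (Fin n)) (r : ℝ), 0 < r →
      ((volume (ball a r))⁻¹ * ∫⁻ x in ball a r, ENNReal.ofReal (w x)) *
        essSup (fun x => ENNReal.ofReal (w x)⁻¹) (volume.restrict (ball a r)) ≤
        ENNReal.ofReal C₀)
    {x a' : EuclideanSpace ℝ (Fin n)} {t c : ℝ} (ht : 0 < t) (hc : 1 ≤ c)
    (hsub : ball x t ⊆ ball a' (c * t)) :
    wSet w (ball a' (c * t)) ≤ ENNReal.ofReal (C₀ * c ^ n) * wSet w (ball x t) := by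
  have hct : 0 < c * t := mul_pos (lt_of_lt_of_le one_pos hc) ht
  have h := double_est w hw hA ht hct hsub
  rw [vol_ball_scale hn a' x t (le_trans zero_le_one hc)] at h
  have hv0 : volume (ball x t) ≠ 0 := (measure_ball_pos volume x ht).ne'
  have hvt : volume (ball x t) ≠ ⊤ := measure_ball_lt_top.ne
  have heq : ENNReal.ofReal (C₀ * c ^ n) = ENNReal.ofReal C₀ * ENNReal.ofReal c ^ n := by
    rw [ENNReal.ofReal_mul hC₀.le, ENNReal.ofReal_pow (le_trans zero_le_one hc)]
  rw [heq]
  calc wSet w (ball a' (c * t))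
      = (volume (ball x t))⁻¹ * (volume (ball x t) * wSet w (ball a' (c * t))) := by
        rw [← mul_assoc, ENNReal.inv_mul_cancel hv0 hvt, one_mul]
    _ ≤ (volume (ball x t))⁻¹ *
        (ENNReal.ofReal C₀ * (ENNReal.ofReal c ^ n * volume (ball x t)) * wSet w (ball x t)) :=
        mul_le_mul_right h _
    _ = (ENNReal.ofReal C₀ * ENNReal.ofReal c ^ n * wSet w (ball x t)) *
        ((volume (ball x t))⁻¹ * volume (ball x t)) := by ring
    _ = ENNReal.ofReal C₀ * ENNReal.ofReal c ^ n * wSet w (ball x t) := by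
        rw [ENNReal.inv_mul_cancel hv0 hvt, mul_one]

end Doubling

section Tail

open ENNReal

variable {n : ℕ}

/-- The tail integral dominates `w(B(a,2u))⁻¹ ∫_{B(a,u)} |f| w` for any `u ≥ r`. -/
private lemma tail_est (w f : EuclideanSpace ℝ (Fin n) → ℝ)
    (a : EuclideanSpace ℝ (Fin n)) {r u : ℝ} (hr : 0 < r) (hu : r ≤ u) :
    (wSet w (ball a (2 * u)))⁻¹ * (∫⁻ y in ball a u, ENNReal.ofReal |f y| * ENNReal.ofReal (w y))
      ≤ 2 * ∫⁻ s in Set.Ioi r,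
          (wSet w (ball a s))⁻¹ * wLp 1 w f (ball a s) * ENNReal.ofReal s⁻¹ := by
  have hu0 : 0 < u := lt_of_lt_of_le hr hu
  set X : ℝ≥0∞ := (wSet w (ball a (2 * u)))⁻¹ *
    (∫⁻ y in ball a u, ENNReal.ofReal |f y| * ENNReal.ofReal (w y)) with hX
  set c : ℝ≥0∞ := X * ENNReal.ofReal (2 * u)⁻¹ with hc
  have step1 : ∫⁻ s in Set.Ioo u (2 * u), c ≤
      ∫⁻ s in Set.Ioo u (2 * u),
        (wSet w (ball a s))⁻¹ * wLp 1 w f (ball a s) * ENNReal.ofReal s⁻¹ := by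
    apply lintegral_mono_ae
    rw [ae_restrict_iff' measurableSet_Ioo]
    apply ae_of_all
    intro s hs
    have h1 : (wSet w (ball a (2 * u)))⁻¹ ≤ (wSet w (ball a s))⁻¹ :=
      ENNReal.inv_le_inv.2 (wSet_mono w (ball_subset_ball hs.2.le))
    have h2 : (∫⁻ y in ball a u, ENNReal.ofReal |f y| * ENNReal.ofReal (w y)) ≤
        wLp 1 w f (ball a s) := by
      rw [wLp_one]
      exact lintegral_mono_set (ball_subset_ball hs.1.le)
    have h3 : ENNReal.ofReal (2 * u)⁻¹ ≤ ENNReal.ofReal s⁻¹ :=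
      ENNReal.ofReal_le_ofReal (by
        apply inv_anti₀ (lt_trans hu0 hs.1) hs.2.le)
    calc c = ((wSet w (ball a (2 * u)))⁻¹ *
          (∫⁻ y in ball a u, ENNReal.ofReal |f y| * ENNReal.ofReal (w y))) *
          ENNReal.ofReal (2 * u)⁻¹ := rfl
      _ ≤ (wSet w (ball a s))⁻¹ * wLp 1 w f (ball a s) * ENNReal.ofReal s⁻¹ :=
          mul_le_mul' (mul_le_mul' h1 h2) h3
  have step2 : (∫⁻ _ in Set.Ioo u (2 * u), c) = c * ENNReal.ofReal u := by
    rw [setLIntegral_const, Real.volume_Ioo]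
    congr 1
    ring_nf
  have step3 : ∫⁻ s in Set.Ioo u (2 * u),
      (wSet w (ball a s))⁻¹ * wLp 1 w f (ball a s) * ENNReal.ofReal s⁻¹ ≤
      ∫⁻ s in Set.Ioi r,
        (wSet w (ball a s))⁻¹ * wLp 1 w f (ball a s) * ENNReal.ofReal s⁻¹ :=
    lintegral_mono_set (fun s hs => lt_of_le_of_lt hu hs.1)
  have hkey : c * ENNReal.ofReal u ≤
      ∫⁻ s in Set.Ioi r,
        (wSet w (ball a s))⁻¹ * wLp 1 w f (ball a s) * ENNReal.ofReal s⁻¹ := by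
    rw [← step2]; exact le_trans step1 step3
  have hhalf : c * ENNReal.ofReal u = X * ENNReal.ofReal (1 / 2) := by
    rw [hc, mul_assoc, ← ENNReal.ofReal_mul (by positivity)]
    congr 2
    field_simp
  have h2 : ENNReal.ofReal (1 / 2) * 2 = 1 := by
    rw [show (2 : ℝ≥0∞) = ENNReal.ofReal 2 by simp, ← ENNReal.ofReal_mul (by norm_num)]
    norm_num
  calc X = X * (ENNReal.ofReal (1 / 2) * 2) := by rw [h2, mul_one]
    _ = (X * ENNReal.ofReal (1 / 2)) * 2 := by ring
    _ ≤ (∫⁻ s in Set.Ioi r,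
          (wSet w (ball a s))⁻¹ * wLp 1 w f (ball a s) * ENNReal.ofReal s⁻¹) * 2 := by
        apply mul_le_mul_left
        rw [← hhalf]; exact hkey
    _ = 2 * ∫⁻ s in Set.Ioi r,
          (wSet w (ball a s))⁻¹ * wLp 1 w f (ball a s) * ENNReal.ofReal s⁻¹ := mul_comm _ _

end Tail

section Weak

open ENNReal

variable {n : ℕ}

/-- Weighted weak (1,1) inequality for the maximal operator, `w ∈ A₁`. -/
private lemma weak11 (hn : n ≠ 0) (w : EuclideanSpace ℝ (Fin n) → ℝ) (hw : IsWeight w)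
    {C₀ : ℝ} (hC₀ : 0 < C₀)
    (hA : ∀ (a : EuclideanSpace ℝ (Fin n)) (r : ℝ), 0 < r →
      ((volume (ball a r))⁻¹ * ∫⁻ x in ball a r, ENNReal.ofReal (w x)) *
        essSup (fun x => ENNReal.ofReal (w x)⁻¹) (volume.restrict (ball a r)) ≤
        ENNReal.ofReal C₀)
    (g : EuclideanSpace ℝ (Fin n) → ℝ)
    (hJ : (∫⁻ y, ENNReal.ofReal |g y|) ≠ ⊤) {γ : ℝ} (hγ : 0 < γ) :
    ENNReal.ofReal γ * wSet w {x | ENNReal.ofReal γ < HLMax g x} ≤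
      ENNReal.ofReal (C₀ ^ 2 * 5 ^ n) *
        ∫⁻ y, ENNReal.ofReal |g y| * ENNReal.ofReal (w y) := by
  haveI : Nonempty (Fin n) := ⟨⟨0, Nat.pos_of_ne_zero hn⟩⟩
  set S := {x | ENNReal.ofReal γ < HLMax g x} with hSdef
  set J := ∫⁻ y, ENNReal.ofReal |g y| with hJdef
  -- choose radii
  have hex : ∀ x : EuclideanSpace ℝ (Fin n), ∃ t : ℝ, 0 < t ∧ (x ∈ S →
      ENNReal.ofReal γ * volume (ball x t) < ∫⁻ y in ball x t, ENNReal.ofReal |g y|) := by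
    intro x
    by_cases hx : x ∈ S
    · have hx' := hx
      rw [hSdef, Set.mem_setOf_eq, HLMax, lt_iSup_iff] at hx'
      obtain ⟨⟨t, ht⟩, hlt⟩ := hx'
      refine ⟨t, ht, fun _ => ?_⟩
      have hv0 : volume (ball x t) ≠ 0 := (measure_ball_pos volume x ht).ne'
      have hvt : volume (ball x t) ≠ ⊤ := measure_ball_lt_top.ne
      have := ENNReal.mul_lt_mul_left hv0 hvt hlt
      calc ENNReal.ofReal γ * volume (ball x t) < (volume (ball x t))⁻¹ *
            (∫⁻ y in ball x t, ENNReal.ofReal |g y|) * volume (ball x t) := this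
        _ = (∫⁻ y in ball x t, ENNReal.ofReal |g y|) *
            ((volume (ball x t))⁻¹ * volume (ball x t)) := by ring
        _ = ∫⁻ y in ball x t, ENNReal.ofReal |g y| := by
            rw [ENNReal.inv_mul_cancel hv0 hvt, mul_one]
    · exact ⟨1, one_pos, fun h => absurd h hx⟩
  choose ρ hρpos hρ using hex
  -- the constant κ = volume of unit ball factor
  set κ : ℝ≥0∞ := ENNReal.ofReal (Real.sqrt Real.pi ^ n / Real.Gamma (n / 2 + 1)) with hκdef
  have hκ0 : κ ≠ 0 := by
    rw [hκdef]
    apply (ENNReal.ofReal_pos.2 _).ne'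
    apply div_pos (pow_pos (Real.sqrt_pos.2 Real.pi_pos) n)
    apply Real.Gamma_pos_of_pos
    positivity
  have hκt : κ ≠ ⊤ := ENNReal.ofReal_ne_top
  have hvol : ∀ (x : EuclideanSpace ℝ (Fin n)) (t : ℝ),
      volume (ball x t) = ENNReal.ofReal t ^ n * κ := by
    intro x t
    rw [EuclideanSpace.volume_ball, Fintype.card_fin]
  -- uniform radius bound
  set A : ℝ := ((J / ENNReal.ofReal γ) / κ).toReal with hAdef
  have hAfin : (J / ENNReal.ofReal γ) / κ ≠ ⊤ := by
    apply (ENNReal.div_lt_top _ hκ0).ne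
    exact (ENNReal.div_lt_top hJ (ENNReal.ofReal_pos.2 hγ).ne').ne
  have hrad : ∀ x ∈ S, ρ x ≤ max 1 A := by
    intro x hx
    have h1 := (hρ x hx).le
    have h2 : volume (ball x (ρ x)) ≤ J / ENNReal.ofReal γ := by
      rw [ENNReal.le_div_iff_mul_le (Or.inl (ENNReal.ofReal_pos.2 hγ).ne')
        (Or.inl ENNReal.ofReal_ne_top), mul_comm]
      exact le_trans h1 (lintegral_mono' Measure.restrict_le_self le_rfl)
    rw [hvol x (ρ x)] at h2
    have h3 : ENNReal.ofReal (ρ x) ^ n ≤ (J / ENNReal.ofReal γ) / κ := by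
      rw [ENNReal.le_div_iff_mul_le (Or.inl hκ0) (Or.inl hκt)]
      exact h2
    rw [← ENNReal.ofReal_pow (hρpos x).le] at h3
    have h4 : ρ x ^ n ≤ A := by
      rw [hAdef]
      exact (ENNReal.ofReal_le_iff_le_toReal hAfin).1 h3
    rcases le_or_gt (ρ x) 1 with h | h
    · exact le_max_of_le_left h
    · refine le_max_of_le_right (le_trans ?_ h4)
      exact le_self_pow₀ h.le hn
  -- Vitali covering
  obtain ⟨u, huS, hdisj, hcover⟩ :=
    Vitali.exists_disjoint_subfamily_covering_enlargement_closedBall S id ρ (max 1 A) hrad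
      4 (by norm_num)
  -- S is covered by the 5-fold dilations
  have hSsub : S ⊆ ⋃ i : ↥u, ball (i : EuclideanSpace ℝ (Fin n)) (5 * ρ i) := by
    intro x hx
    obtain ⟨b, hb, hsub⟩ := hcover x hx
    have hxb : x ∈ closedBall (id b) (4 * ρ b) := hsub (mem_closedBall_self (hρpos x).le)
    have : x ∈ ball (id b) (5 * ρ b) :=
      closedBall_subset_ball (by have := hρpos b; linarith) hxb
    exact Set.mem_iUnion.2 ⟨⟨b, hb⟩, this⟩
  -- countability
  have hcnt : u.Countable := by
    have hpos : ∀ i : ↥u, 0 < volume (closedBall (i : EuclideanSpace ℝ (Fin n)) (ρ i)) :=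
      fun i => lt_of_lt_of_le (measure_ball_pos volume _ (hρpos i))
        (measure_mono ball_subset_closedBall)
    have hdisj2 : Pairwise (Function.onFun Disjoint
        fun i : ↥u => closedBall (i : EuclideanSpace ℝ (Fin n)) (ρ i)) := by
      intro i j hij
      exact hdisj i.2 j.2 (fun h => hij (Subtype.ext h))
    have := MeasureTheory.Measure.countable_meas_pos_of_disjoint_iUnion (μ := volume)
      (As := fun i : ↥u => closedBall (i : EuclideanSpace ℝ (Fin n)) (ρ i))
      (fun _ => measurableSet_closedBall) hdisj2
    have heq : {i : ↥u | 0 < volume (closedBall (i : EuclideanSpace ℝ (Fin n)) (ρ i))} =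
        Set.univ := Set.eq_univ_of_forall (fun i => hpos i)
    rw [heq] at this
    rw [← Set.countable_coe_iff]
    exact Set.countable_univ_iff.1 this
  haveI : Countable ↥u := hcnt.to_subtype
  have hballdisj : Pairwise (Function.onFun Disjoint
      fun i : ↥u => ball (i : EuclideanSpace ℝ (Fin n)) (ρ i)) := by
    intro i j hij
    exact (hdisj i.2 j.2 (fun h => hij (Subtype.ext h))).mono
      ball_subset_closedBall ball_subset_closedBall
  -- step 1: subadditivity over the covering
  have step1 : wSet w S ≤ ∑' i : ↥u,
      wSet w (ball (i : EuclideanSpace ℝ (Fin n)) (5 * ρ i)) := by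
    calc wSet w S ≤ wSet w (⋃ i : ↥u, ball (i : EuclideanSpace ℝ (Fin n)) (5 * ρ i)) :=
        wSet_mono w hSsub
      _ ≤ ∑' i : ↥u, wSet w (ball (i : EuclideanSpace ℝ (Fin n)) (5 * ρ i)) := by
          rw [wSet]
          calc (∫⁻ x in ⋃ i : ↥u, ball (i : EuclideanSpace ℝ (Fin n)) (5 * ρ i),
                ENNReal.ofReal (w x)) ≤
              ∫⁻ x, ENNReal.ofReal (w x) ∂(Measure.sum fun i : ↥u =>
                volume.restrict (ball (i : EuclideanSpace ℝ (Fin n)) (5 * ρ i))) :=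
              lintegral_mono' Measure.restrict_iUnion_le le_rfl
            _ = ∑' i : ↥u, wSet w (ball (i : EuclideanSpace ℝ (Fin n)) (5 * ρ i)) :=
              lintegral_sum_measure _ _
  -- step 2: each dilated ball
  have step2 : ∀ i : ↥u, ENNReal.ofReal γ *
      wSet w (ball (i : EuclideanSpace ℝ (Fin n)) (5 * ρ i)) ≤
      ENNReal.ofReal (C₀ * 5 ^ n) * ENNReal.ofReal C₀ *
        ∫⁻ y in ball (i : EuclideanSpace ℝ (Fin n)) (ρ i),
          ENNReal.ofReal |g y| * ENNReal.ofReal (w y) := by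
    intro i
    have hti : (0 : ℝ) < ρ i := hρpos i
    have hdbl := double_scaled hn w hw hC₀ hA
      (x := (i : EuclideanSpace ℝ (Fin n))) (a' := (i : EuclideanSpace ℝ (Fin n)))
      (c := 5) hti (by norm_num : (1:ℝ) ≤ 5) (ball_subset_ball (by linarith))
    have hkey := key_est w hw hA (i : EuclideanSpace ℝ (Fin n)) hti
      (fun y => ENNReal.ofReal |g y|)
    have havg : ENNReal.ofReal γ * volume (ball (i : EuclideanSpace ℝ (Fin n)) (ρ i)) ≤
        ∫⁻ y in ball (i : EuclideanSpace ℝ (Fin n)) (ρ i), ENNReal.ofReal |g y| :=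
      (hρ i (huS i.2)).le
    set B := ball (i : EuclideanSpace ℝ (Fin n)) (ρ i)
    have hv0 : volume B ≠ 0 := (measure_ball_pos volume _ hti).ne'
    have hvt : volume B ≠ ⊤ := measure_ball_lt_top.ne
    have hγw : ENNReal.ofReal γ * wSet w B ≤ ENNReal.ofReal C₀ *
        ∫⁻ y in B, ENNReal.ofReal |g y| * ENNReal.ofReal (w y) := by
      have h1 : ENNReal.ofReal γ * volume B * wSet w B ≤
          ENNReal.ofReal C₀ * volume B *
            ∫⁻ y in B, ENNReal.ofReal |g y| * ENNReal.ofReal (w y) :=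
        le_trans (mul_le_mul_left havg _) hkey
      calc ENNReal.ofReal γ * wSet w B =
            (volume B)⁻¹ * (ENNReal.ofReal γ * volume B * wSet w B) := by
            rw [show ENNReal.ofReal γ * volume B * wSet w B =
              volume B * (ENNReal.ofReal γ * wSet w B) by ring, ← mul_assoc,
              ENNReal.inv_mul_cancel hv0 hvt, one_mul]
        _ ≤ (volume B)⁻¹ * (ENNReal.ofReal C₀ * volume B *
              ∫⁻ y in B, ENNReal.ofReal |g y| * ENNReal.ofReal (w y)) :=
            mul_le_mul_right h1 _
        _ = (ENNReal.ofReal C₀ *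
              ∫⁻ y in B, ENNReal.ofReal |g y| * ENNReal.ofReal (w y)) *
              ((volume B)⁻¹ * volume B) := by ring
        _ = ENNReal.ofReal C₀ *
              ∫⁻ y in B, ENNReal.ofReal |g y| * ENNReal.ofReal (w y) := by
            rw [ENNReal.inv_mul_cancel hv0 hvt, mul_one]
    calc ENNReal.ofReal γ * wSet w (ball (i : EuclideanSpace ℝ (Fin n)) (5 * ρ i)) ≤
        ENNReal.ofReal γ * (ENNReal.ofReal (C₀ * 5 ^ n) * wSet w B) :=
          mul_le_mul_right hdbl _
      _ = ENNReal.ofReal (C₀ * 5 ^ n) * (ENNReal.ofReal γ * wSet w B) := by ring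
      _ ≤ ENNReal.ofReal (C₀ * 5 ^ n) * (ENNReal.ofReal C₀ *
            ∫⁻ y in B, ENNReal.ofReal |g y| * ENNReal.ofReal (w y)) :=
          mul_le_mul_right hγw _
      _ = ENNReal.ofReal (C₀ * 5 ^ n) * ENNReal.ofReal C₀ *
            ∫⁻ y in B, ENNReal.ofReal |g y| * ENNReal.ofReal (w y) := by ring
  -- step 3: sum the disjoint balls
  have step3 : ∑' i : ↥u, (∫⁻ y in ball (i : EuclideanSpace ℝ (Fin n)) (ρ i),
      ENNReal.ofReal |g y| * ENNReal.ofReal (w y)) ≤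
      ∫⁻ y, ENNReal.ofReal |g y| * ENNReal.ofReal (w y) := by
    rw [← lintegral_iUnion (fun i => measurableSet_ball) hballdisj]
    exact lintegral_mono' Measure.restrict_le_self le_rfl
  -- assemble
  calc ENNReal.ofReal γ * wSet w S ≤
      ENNReal.ofReal γ * ∑' i : ↥u, wSet w (ball (i : EuclideanSpace ℝ (Fin n)) (5 * ρ i)) :=
        mul_le_mul_right step1 _
    _ = ∑' i : ↥u, ENNReal.ofReal γ *
          wSet w (ball (i : EuclideanSpace ℝ (Fin n)) (5 * ρ i)) := ENNReal.tsum_mul_left.symm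
    _ ≤ ∑' i : ↥u, ENNReal.ofReal (C₀ * 5 ^ n) * ENNReal.ofReal C₀ *
          ∫⁻ y in ball (i : EuclideanSpace ℝ (Fin n)) (ρ i),
            ENNReal.ofReal |g y| * ENNReal.ofReal (w y) := ENNReal.tsum_le_tsum step2
    _ = ENNReal.ofReal (C₀ * 5 ^ n) * ENNReal.ofReal C₀ *
          ∑' i : ↥u, ∫⁻ y in ball (i : EuclideanSpace ℝ (Fin n)) (ρ i),
            ENNReal.ofReal |g y| * ENNReal.ofReal (w y) := ENNReal.tsum_mul_left
    _ ≤ ENNReal.ofReal (C₀ * 5 ^ n) * ENNReal.ofReal C₀ *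
          ∫⁻ y, ENNReal.ofReal |g y| * ENNReal.ofReal (w y) := mul_le_mul_right step3 _
    _ = ENNReal.ofReal (C₀ ^ 2 * 5 ^ n) *
          ∫⁻ y, ENNReal.ofReal |g y| * ENNReal.ofReal (w y) := by
        rw [← ENNReal.ofReal_mul (by positivity)]
        ring_nf

end Weak

section Misc

open ENNReal

variable {n : ℕ}

private lemma lint_inv_top {r : ℝ} (hr : 0 < r) :
    (∫⁻ s in Set.Ioi r, ENNReal.ofReal s⁻¹) = ⊤ := by
  by_contra h
  have hfm : AEStronglyMeasurable (fun s : ℝ => s⁻¹) (volume.restrict (Set.Ioi r)) :=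
    (measurable_inv.aestronglyMeasurable)
  have hnn : 0 ≤ᵐ[volume.restrict (Set.Ioi r)] (fun s : ℝ => s⁻¹) := by
    rw [Filter.EventuallyLE, ae_restrict_iff' measurableSet_Ioi]
    exact ae_of_all _ (fun s hs => by
      simp only [Pi.zero_apply]
      have : (0:ℝ) < s := lt_trans hr hs
      positivity)
  have := (lintegral_ofReal_ne_top_iff_integrable hfm hnn).1 h
  exact not_IntegrableOn_Ioi_inv this

private lemma hlmax_split (f f₁ f₂ : EuclideanSpace ℝ (Fin n) → ℝ)
    (hm : Measurable f₁)
    (h : ∀ y, ENNReal.ofReal |f y| = ENNReal.ofReal |f₁ y| + ENNReal.ofReal |f₂ y|)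
    (x : EuclideanSpace ℝ (Fin n)) : HLMax f x ≤ HLMax f₁ x + HLMax f₂ x := by
  rw [HLMax]
  apply iSup_le
  rintro ⟨t, ht⟩
  have hsum : (∫⁻ y in ball x t, ENNReal.ofReal |f y|) =
      (∫⁻ y in ball x t, ENNReal.ofReal |f₁ y|) +
        ∫⁻ y in ball x t, ENNReal.ofReal |f₂ y| := by
    rw [← lintegral_add_left]
    · exact lintegral_congr (fun y => h y)
    · exact measurable_coe_nnreal_ennreal.comp (hm.abs.real_toNNReal)
  have h1 : (volume (ball x t))⁻¹ * ∫⁻ y in ball x t, ENNReal.ofReal |f₁ y| ≤ HLMax f₁ x :=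
    le_iSup (fun s : Set.Ioi (0:ℝ) =>
      (volume (ball x s.1))⁻¹ * ∫⁻ y in ball x s.1, ENNReal.ofReal |f₁ y|) ⟨t, ht⟩
  have h2 : (volume (ball x t))⁻¹ * ∫⁻ y in ball x t, ENNReal.ofReal |f₂ y| ≤ HLMax f₂ x :=
    le_iSup (fun s : Set.Ioi (0:ℝ) =>
      (volume (ball x s.1))⁻¹ * ∫⁻ y in ball x s.1, ENNReal.ofReal |f₂ y|) ⟨t, ht⟩
  calc (volume (ball x t))⁻¹ * ∫⁻ y in ball x t, ENNReal.ofReal |f y|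
      = (volume (ball x t))⁻¹ * (∫⁻ y in ball x t, ENNReal.ofReal |f₁ y|) +
        (volume (ball x t))⁻¹ * ∫⁻ y in ball x t, ENNReal.ofReal |f₂ y| := by
        rw [hsum, mul_add]
    _ ≤ HLMax f₁ x + HLMax f₂ x := add_le_add h1 h2

end Misc

section Dim0

open ENNReal

private lemma dim0_case (w : EuclideanSpace ℝ (Fin 0) → ℝ) (hw : IsWeight w)
    (a : EuclideanSpace ℝ (Fin 0)) (r : ℝ) (f : EuclideanSpace ℝ (Fin 0) → ℝ)
    (hr : 0 < r) (hf : MemLocWLp 1 w f) :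
    wWeakLpE 1 w (HLMax f) (ball a r) ≤
      ENNReal.ofReal 1 * wSet w (ball a r) *
        ∫⁻ s in Set.Ioi r,
          (wSet w (ball a s))⁻¹ * wLp 1 w f (ball a s) * ENNReal.ofReal s⁻¹ := by
  haveI : Subsingleton (EuclideanSpace ℝ (Fin 0)) :=
    inferInstance
  have hball : ∀ s : ℝ, 0 < s → ball a s = Set.univ := by
    intro s hs
    apply Set.eq_univ_of_forall
    intro x
    rw [mem_ball, Subsingleton.elim x a, dist_self]
    exact hs
  set I := ∫⁻ y in ball a r, ENNReal.ofReal |f y| * ENNReal.ofReal (w y) with hI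
  by_cases hI0 : I = 0
  · -- LHS is zero
    have hmeas : Measurable fun y => ENNReal.ofReal |f y| * ENNReal.ofReal (w y) :=
      ((measurable_coe_nnreal_ennreal.comp (hf.1.abs.real_toNNReal))).mul
        ((measurable_coe_nnreal_ennreal.comp (hw.1.real_toNNReal)))
    have h1 : (∫⁻ y, ENNReal.ofReal |f y| * ENNReal.ofReal (w y)) = 0 := by
      rw [← Measure.restrict_univ (μ := volume), ← hball r hr]
      exact hI0
    rw [lintegral_eq_zero_iff hmeas] at h1
    have hae : ∀ᵐ y ∂(volume : Measure (EuclideanSpace ℝ (Fin 0))),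
        ENNReal.ofReal |f y| = 0 := by
      filter_upwards [h1, hw.2.2.2] with y h2 h3
      have h2' : ENNReal.ofReal |f y| * ENNReal.ofReal (w y) = 0 := h2
      rcases mul_eq_zero.1 h2' with h | h
      · exact h
      · exact absurd h (ENNReal.ofReal_pos.2 h3).ne'
    have hmax0 : ∀ x, HLMax f x = 0 := by
      intro x
      apply le_antisymm _ zero_le
      rw [HLMax]
      apply iSup_le
      rintro ⟨t, ht⟩
      have hz : (∫⁻ y in ball x t, ENNReal.ofReal |f y|) = 0 := by
        calc (∫⁻ y in ball x t, ENNReal.ofReal |f y|) =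
            ∫⁻ _ in ball x t, (0:ℝ≥0∞) := lintegral_congr_ae (ae_restrict_of_ae hae)
          _ = 0 := lintegral_zero
      rw [hz, mul_zero]
    rw [wWeakLpE]
    apply iSup_le
    rintro ⟨γ, hγ⟩
    have hempty : {x | x ∈ ball a r ∧ ENNReal.ofReal γ < HLMax f x} = ∅ := by
      apply Set.eq_empty_iff_forall_notMem.2
      rintro x ⟨_, hlt⟩
      rw [hmax0 x] at hlt
      exact (not_lt_of_ge zero_le) hlt
    have hwe : wSet w (∅ : Set (EuclideanSpace ℝ (Fin 0))) = 0 := by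
      rw [wSet, Measure.restrict_empty, lintegral_zero_measure]
    calc ENNReal.ofReal γ *
        wSet w {x | x ∈ ball a r ∧ ENNReal.ofReal γ < HLMax f x} ^ (1/(1:ℝ)) =
        ENNReal.ofReal γ * (0:ℝ≥0∞) ^ (1/(1:ℝ)) := by rw [hempty, hwe]
      _ = 0 := by
          rw [show (1:ℝ)/1 = 1 by norm_num, ENNReal.rpow_one, mul_zero]
      _ ≤ _ := zero_le
  · -- RHS is infinite
    have hWpos := wSet_ball_pos w hw a hr
    have hWfin := wSet_ball_ne_top w hw a r
    have hIfin : I ≠ ⊤ := by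
      have := hf.2 a r hr
      rw [wLp_one] at this
      exact this.ne
    have hcfin : (wSet w (ball a r))⁻¹ * I ≠ ⊤ :=
      ENNReal.mul_ne_top (ENNReal.inv_ne_top.2 hWpos.ne') hIfin
    have hc0 : (wSet w (ball a r))⁻¹ * I ≠ 0 :=
      mul_ne_zero (ENNReal.inv_ne_zero.2 hWfin) hI0
    have hRtop : (∫⁻ s in Set.Ioi r,
        (wSet w (ball a s))⁻¹ * wLp 1 w f (ball a s) * ENNReal.ofReal s⁻¹) = ⊤ := by
      have hcongr : ∀ s ∈ Set.Ioi r,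
          (wSet w (ball a s))⁻¹ * wLp 1 w f (ball a s) * ENNReal.ofReal s⁻¹ =
          ((wSet w (ball a r))⁻¹ * I) * ENNReal.ofReal s⁻¹ := by
        intro s hs
        rw [Set.mem_Ioi] at hs
        have hbs : ball a s = ball a r := by rw [hball s (lt_trans hr hs), hball r hr]
        rw [wLp_one, hbs, ← hI]
      rw [setLIntegral_congr_fun measurableSet_Ioi hcongr,
        lintegral_const_mul' _ _ hcfin, lint_inv_top hr, ENNReal.mul_top hc0]
    rw [hRtop, ENNReal.mul_top (by
      apply mul_ne_zero _ hWpos.ne'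
      simp)]
    exact le_top

end Dim0

/-- Let `w ∈ A_1`. Then there is `C > 0`, independent of `f`, `a`, `r`,
such that for every `a ∈ ℝⁿ`, `r > 0` and `f ∈ L^{1,w}_loc`:
`‖Mf‖_{WL^{1,w}(B(a,r))} ≤ C·w(B(a,r))·∫_r^∞ w(B(a,s))⁻¹‖f‖_{L^{1,w}(B(a,s))} ds/s`. -/
theorem statement9 {n : ℕ}
    (w : EuclideanSpace ℝ (Fin n) → ℝ) (hw : IsWeight w) (hA1 : MuckA1 w) :
    ∃ C : ℝ, 0 < C ∧
      ∀ (a : EuclideanSpace ℝ (Fin n)) (r : ℝ) (f : EuclideanSpace ℝ (Fin n) → ℝ),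
        0 < r → MemLocWLp 1 w f →
        wWeakLpE 1 w (HLMax f) (ball a r) ≤
          ENNReal.ofReal C * wSet w (ball a r) *
            ∫⁻ s in Set.Ioi r,
              (wSet w (ball a s))⁻¹ * wLp 1 w f (ball a s) * ENNReal.ofReal s⁻¹ := by
  obtain ⟨C₀, hC₀, hA⟩ := hA1
  by_cases hn : n = 0
  · subst hn
    exact ⟨1, one_pos, fun a r f hr hf => dim0_case w hw a r f hr hf⟩
  · refine ⟨4*((C₀^2*5^n)*(C₀*4^n)) + 4*(C₀*(C₀*2^n)*(C₀*2^n)) + 1, by positivity, ?_⟩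
    set D₁ : ℝ := 4*((C₀^2*5^n)*(C₀*4^n)) with hD₁def
    set D₂ : ℝ := C₀*(C₀*2^n)*(C₀*2^n) with hD₂def
    have hD₁pos : 0 < D₁ := by rw [hD₁def]; positivity
    have hD₂pos : 0 < D₂ := by rw [hD₂def]; positivity
    intro a r f hr hf
    obtain ⟨hfm, hfloc⟩ := hf
    set R := ∫⁻ s in Set.Ioi r,
      (wSet w (ball a s))⁻¹ * wLp 1 w f (ball a s) * ENNReal.ofReal s⁻¹ with hRdef
    rw [wWeakLpE]
    apply iSup_le
    rintro ⟨γ, hγmem⟩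
    have hγ : 0 < γ := hγmem
    dsimp only
    rw [show (1:ℝ)/1 = 1 by norm_num, ENNReal.rpow_one]
    set γ' : ℝ := γ / 2 with hγ'def
    have hγ' : 0 < γ' := by positivity
    set f₁ := (ball a (2*r)).indicator f with hf₁
    set f₂ := (ball a (2*r))ᶜ.indicator f with hf₂
    have h2r : (0:ℝ) < 2*r := by linarith
    have hsplit : ∀ y, ENNReal.ofReal |f y| =
        ENNReal.ofReal |f₁ y| + ENNReal.ofReal |f₂ y| := by
      intro y
      by_cases hy : y ∈ ball a (2*r) <;>
        simp [hf₁, hf₂, Set.indicator_apply, hy]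
    have hf₁m : Measurable f₁ := hfm.indicator measurableSet_ball
    have hmax := hlmax_split f f₁ f₂ hf₁m hsplit
    set S₁ := {x | ENNReal.ofReal γ' < HLMax f₁ x} with hS₁
    set S₂ := {x | x ∈ ball a r ∧ ENNReal.ofReal γ' < HLMax f₂ x} with hS₂
    have hγγ' : ENNReal.ofReal γ = ENNReal.ofReal γ' + ENNReal.ofReal γ' := by
      rw [← ENNReal.ofReal_add hγ'.le hγ'.le]
      congr 1
      rw [hγ'def]; ring
    have hγ2 : ENNReal.ofReal γ = 2 * ENNReal.ofReal γ' := by rw [hγγ', two_mul]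
    have hsubset : {x | x ∈ ball a r ∧ ENNReal.ofReal γ < HLMax f x} ⊆ S₁ ∪ S₂ := by
      intro x hx
      by_contra hcon
      rw [Set.mem_union] at hcon
      push_neg at hcon
      have h1 : HLMax f₁ x ≤ ENNReal.ofReal γ' := not_lt.1 hcon.1
      have h2 : HLMax f₂ x ≤ ENNReal.ofReal γ' := not_lt.1 (fun h => hcon.2 ⟨hx.1, h⟩)
      have := lt_of_lt_of_le hx.2 (le_trans (hmax x) (add_le_add h1 h2))
      rw [← hγγ'] at this
      exact lt_irrefl _ this
    have hsplitset : wSet w {x | x ∈ ball a r ∧ ENNReal.ofReal γ < HLMax f x} ≤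
        wSet w S₁ + wSet w S₂ :=
      le_trans (wSet_mono w hsubset) (lintegral_union_le _ _ _)
    have hIfin : ∀ s : ℝ, 0 < s →
        (∫⁻ y in ball a s, ENNReal.ofReal |f y| * ENNReal.ofReal (w y)) ≠ ⊤ := by
      intro s hs
      have := hfloc a s hs
      rw [wLp_one] at this
      exact this.ne
    -- ## Bound for S₁
    have hIglob : (∫⁻ y, ENNReal.ofReal |f₁ y| * ENNReal.ofReal (w y)) =
        ∫⁻ y in ball a (2*r), ENNReal.ofReal |f y| * ENNReal.ofReal (w y) := by
      rw [← lintegral_indicator measurableSet_ball]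
      apply lintegral_congr
      intro y
      by_cases hy : y ∈ ball a (2*r) <;> simp [hf₁, Set.indicator_apply, hy]
    have hJglob : (∫⁻ y, ENNReal.ofReal |f₁ y|) =
        ∫⁻ y in ball a (2*r), ENNReal.ofReal |f y| := by
      rw [← lintegral_indicator measurableSet_ball]
      apply lintegral_congr
      intro y
      by_cases hy : y ∈ ball a (2*r) <;> simp [hf₁, Set.indicator_apply, hy]
    have hJfin : (∫⁻ y, ENNReal.ofReal |f₁ y|) ≠ ⊤ := by
      rw [hJglob]
      intro htop
      have hkey := key_est w hw hA a h2r (fun y => ENNReal.ofReal |f y|)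
      rw [htop, ENNReal.top_mul (wSet_ball_pos w hw a h2r).ne', top_le_iff] at hkey
      have hfin : ENNReal.ofReal C₀ * volume (ball a (2*r)) *
          (∫⁻ y in ball a (2*r), ENNReal.ofReal |f y| * ENNReal.ofReal (w y)) ≠ ⊤ :=
        ENNReal.mul_ne_top
          (ENNReal.mul_ne_top ENNReal.ofReal_ne_top measure_ball_lt_top.ne)
          (hIfin _ h2r)
      exact hfin hkey
    have hw11 := weak11 hn w hw hC₀ hA f₁ hJfin hγ'
    have htail := tail_est w f a hr (le_of_lt (by linarith : r < 2*r))
    rw [show (2:ℝ)*(2*r) = 4*r by ring] at htail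
    have hdb4 : wSet w (ball a (4*r)) ≤ ENNReal.ofReal (C₀ * 4^n) * wSet w (ball a r) := by
      have := double_scaled hn w hw hC₀ hA (x := a) (a' := a) (c := 4) hr
        (by norm_num) (ball_subset_ball (by linarith))
      rwa [show (4:ℝ)*r = 4*r by ring] at this
    have hW4pos := wSet_ball_pos w hw a (by linarith : (0:ℝ) < 4*r)
    have hW4fin := wSet_ball_ne_top w hw a (4*r)
    have hI2r : (∫⁻ y in ball a (2*r), ENNReal.ofReal |f y| * ENNReal.ofReal (w y)) ≤
        ENNReal.ofReal (C₀ * 4^n) * wSet w (ball a r) * (2 * R) := by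
      calc (∫⁻ y in ball a (2*r), ENNReal.ofReal |f y| * ENNReal.ofReal (w y))
          = wSet w (ball a (4*r)) * ((wSet w (ball a (4*r)))⁻¹ *
            ∫⁻ y in ball a (2*r), ENNReal.ofReal |f y| * ENNReal.ofReal (w y)) := by
            rw [← mul_assoc, ENNReal.mul_inv_cancel hW4pos.ne' hW4fin, one_mul]
        _ ≤ wSet w (ball a (4*r)) * (2 * R) := mul_le_mul_right htail _
        _ ≤ ENNReal.ofReal (C₀ * 4^n) * wSet w (ball a r) * (2 * R) :=
            mul_le_mul_left hdb4 _
    have hB1 : ENNReal.ofReal γ * wSet w S₁ ≤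
        ENNReal.ofReal D₁ * (wSet w (ball a r) * R) := by
      have e1 : ENNReal.ofReal D₁ =
          2 * (ENNReal.ofReal (C₀^2*5^n) * (ENNReal.ofReal (C₀*4^n) * 2)) := by
        rw [hD₁def, ENNReal.ofReal_mul (by norm_num : (0:ℝ) ≤ 4),
          ENNReal.ofReal_mul (by positivity : (0:ℝ) ≤ C₀^2*5^n),
          show ENNReal.ofReal (4:ℝ) = 4 by simp]
        ring
      calc ENNReal.ofReal γ * wSet w S₁ = 2 * (ENNReal.ofReal γ' * wSet w S₁) := by
            rw [hγ2]; ring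
        _ ≤ 2 * (ENNReal.ofReal (C₀^2*5^n) *
              ∫⁻ y, ENNReal.ofReal |f₁ y| * ENNReal.ofReal (w y)) :=
            mul_le_mul_right hw11 _
        _ = 2 * (ENNReal.ofReal (C₀^2*5^n) *
              ∫⁻ y in ball a (2*r), ENNReal.ofReal |f y| * ENNReal.ofReal (w y)) := by
            rw [hIglob]
        _ ≤ 2 * (ENNReal.ofReal (C₀^2*5^n) *
              (ENNReal.ofReal (C₀ * 4^n) * wSet w (ball a r) * (2 * R))) :=
            mul_le_mul_right (mul_le_mul_right hI2r _) _
        _ = ENNReal.ofReal D₁ * (wSet w (ball a r) * R) := by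
            rw [e1]; ring
    -- ## Bound for S₂
    set K := ENNReal.ofReal D₂ * (2 * R) with hKdef
    have hD2e : ENNReal.ofReal D₂ = ENNReal.ofReal C₀ *
        (ENNReal.ofReal (C₀*2^n) * ENNReal.ofReal (C₀*2^n)) := by
      rw [hD₂def, ENNReal.ofReal_mul (by positivity : (0:ℝ) ≤ C₀*(C₀*2^n)),
        ENNReal.ofReal_mul hC₀.le]
      ring
    have hc2n0 : ENNReal.ofReal (C₀*2^n) ≠ 0 := by
      apply (ENNReal.ofReal_pos.2 _).ne'
      positivity
    have hpt : ∀ x ∈ ball a r, HLMax f₂ x ≤ K := by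
      intro x hx
      rw [HLMax]
      apply iSup_le
      rintro ⟨t, ht⟩
      have ht' : (0:ℝ) < t := ht
      by_cases htr : t ≤ r
      · have hsub : ball x t ⊆ ball a (2*r) := by
          intro y hy
          rw [mem_ball] at *
          calc dist y a ≤ dist y x + dist x a := dist_triangle _ _ _
            _ < t + r := add_lt_add hy hx
            _ ≤ 2*r := by linarith
        have hzero : (∫⁻ y in ball x t, ENNReal.ofReal |f₂ y|) = 0 := by
          rw [setLIntegral_congr_fun measurableSet_ball
            (fun y hy => ?_), lintegral_zero]
          have hy2 : y ∈ ball a (2*r) := hsub hy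
          simp [hf₂, Set.indicator_apply, hy2]
        rw [hzero, mul_zero]
        exact zero_le
      · push_neg at htr
        have hsub2t : ball x t ⊆ ball a (2*t) := by
          intro y hy
          rw [mem_ball] at *
          calc dist y a ≤ dist y x + dist x a := dist_triangle _ _ _
            _ < t + r := add_lt_add hy hx
            _ ≤ 2*t := by linarith
        have hv0 : volume (ball x t) ≠ 0 := (measure_ball_pos volume x ht').ne'
        have hvt : volume (ball x t) ≠ ⊤ := measure_ball_lt_top.ne
        have hWx0 : wSet w (ball x t) ≠ 0 := (wSet_ball_pos w hw x ht').ne'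
        have hWxt : wSet w (ball x t) ≠ ⊤ := wSet_ball_ne_top w hw x t
        have hf2le : ∀ y, ENNReal.ofReal |f₂ y| ≤ ENNReal.ofReal |f y| := by
          intro y
          by_cases hy : y ∈ (ball a (2*r))ᶜ <;> simp [hf₂, Set.indicator_apply, hy]
        have hkey := key_est w hw hA x ht' (fun y => ENNReal.ofReal |f y|)
        have hstep : (∫⁻ y in ball x t, ENNReal.ofReal |f y|) ≤
            ENNReal.ofReal C₀ * volume (ball x t) *
              (∫⁻ y in ball a (2*t), ENNReal.ofReal |f y| * ENNReal.ofReal (w y)) *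
              (wSet w (ball x t))⁻¹ := by
          calc (∫⁻ y in ball x t, ENNReal.ofReal |f y|)
              = (∫⁻ y in ball x t, ENNReal.ofReal |f y|) * wSet w (ball x t) *
                (wSet w (ball x t))⁻¹ := by
                rw [mul_assoc, ENNReal.mul_inv_cancel hWx0 hWxt, mul_one]
            _ ≤ (ENNReal.ofReal C₀ * volume (ball x t) *
                  ∫⁻ y in ball x t, ENNReal.ofReal |f y| * ENNReal.ofReal (w y)) *
                (wSet w (ball x t))⁻¹ := mul_le_mul_left hkey _
            _ ≤ (ENNReal.ofReal C₀ * volume (ball x t) *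
                  ∫⁻ y in ball a (2*t), ENNReal.ofReal |f y| * ENNReal.ofReal (w y)) *
                (wSet w (ball x t))⁻¹ :=
                mul_le_mul_left (mul_le_mul_right (lintegral_mono_set hsub2t) _) _
        have hinv1 : (wSet w (ball x t))⁻¹ ≤
            ENNReal.ofReal (C₀*2^n) * (wSet w (ball a (2*t)))⁻¹ :=
          aux_inv_le hc2n0 ENNReal.ofReal_ne_top
            (double_scaled hn w hw hC₀ hA (x := x) (a' := a) (c := 2) ht'
              (by norm_num) hsub2t)
        have hinv2 : (wSet w (ball a (2*t)))⁻¹ ≤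
            ENNReal.ofReal (C₀*2^n) * (wSet w (ball a (2*(2*t))))⁻¹ :=
          aux_inv_le hc2n0 ENNReal.ofReal_ne_top
            (double_scaled hn w hw hC₀ hA (x := a) (a' := a) (c := 2) (t := 2*t)
              (by linarith) (by norm_num) (ball_subset_ball (by linarith)))
        have htail2 := tail_est w f a hr (u := 2*t) (by linarith : r ≤ 2*t)
        calc (volume (ball x t))⁻¹ * ∫⁻ y in ball x t, ENNReal.ofReal |f₂ y|
            ≤ (volume (ball x t))⁻¹ * ∫⁻ y in ball x t, ENNReal.ofReal |f y| :=
              mul_le_mul_right (lintegral_mono (fun y => hf2le y)) _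
          _ ≤ (volume (ball x t))⁻¹ * (ENNReal.ofReal C₀ * volume (ball x t) *
                (∫⁻ y in ball a (2*t), ENNReal.ofReal |f y| * ENNReal.ofReal (w y)) *
                (wSet w (ball x t))⁻¹) := mul_le_mul_right hstep _
          _ = ENNReal.ofReal C₀ *
                ((∫⁻ y in ball a (2*t), ENNReal.ofReal |f y| * ENNReal.ofReal (w y)) *
                  (wSet w (ball x t))⁻¹) * ((volume (ball x t))⁻¹ * volume (ball x t)) := by
              ring
          _ = ENNReal.ofReal C₀ *
                ((∫⁻ y in ball a (2*t), ENNReal.ofReal |f y| * ENNReal.ofReal (w y)) *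
                  (wSet w (ball x t))⁻¹) := by
              rw [ENNReal.inv_mul_cancel hv0 hvt, mul_one]
          _ ≤ ENNReal.ofReal C₀ *
                ((∫⁻ y in ball a (2*t), ENNReal.ofReal |f y| * ENNReal.ofReal (w y)) *
                  (ENNReal.ofReal (C₀*2^n) * (wSet w (ball a (2*t)))⁻¹)) :=
              mul_le_mul_right (mul_le_mul_right hinv1 _) _
          _ ≤ ENNReal.ofReal C₀ *
                ((∫⁻ y in ball a (2*t), ENNReal.ofReal |f y| * ENNReal.ofReal (w y)) *
                  (ENNReal.ofReal (C₀*2^n) *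
                    (ENNReal.ofReal (C₀*2^n) * (wSet w (ball a (2*(2*t))))⁻¹))) :=
              mul_le_mul_right (mul_le_mul_right (mul_le_mul_right hinv2 _) _) _
          _ = ENNReal.ofReal C₀ * (ENNReal.ofReal (C₀*2^n) * ENNReal.ofReal (C₀*2^n)) *
                ((wSet w (ball a (2*(2*t))))⁻¹ *
                  ∫⁻ y in ball a (2*t), ENNReal.ofReal |f y| * ENNReal.ofReal (w y)) := by
              ring
          _ ≤ ENNReal.ofReal C₀ * (ENNReal.ofReal (C₀*2^n) * ENNReal.ofReal (C₀*2^n)) *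
                (2 * R) := mul_le_mul_right htail2 _
          _ = K := by rw [hKdef, hD2e]
    have hB2 : ENNReal.ofReal γ * wSet w S₂ ≤
        ENNReal.ofReal (4*D₂) * (wSet w (ball a r) * R) := by
      have e2 : ENNReal.ofReal (4*D₂) = 4 * ENNReal.ofReal D₂ := by
        rw [ENNReal.ofReal_mul (by norm_num : (0:ℝ) ≤ 4), show ENNReal.ofReal (4:ℝ) = 4 by simp]
      by_cases hcase : ENNReal.ofReal γ' ≤ K
      · have hsubS₂ : S₂ ⊆ ball a r := fun x hx => hx.1
        calc ENNReal.ofReal γ * wSet w S₂ = 2 * (ENNReal.ofReal γ' * wSet w S₂) := by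
              rw [hγ2]; ring
          _ ≤ 2 * (K * wSet w (ball a r)) :=
              mul_le_mul_right (mul_le_mul' hcase (wSet_mono w hsubS₂)) _
          _ = ENNReal.ofReal (4*D₂) * (wSet w (ball a r) * R) := by
              rw [e2, hKdef]; ring
      · have hempty : S₂ = ∅ := by
          apply Set.eq_empty_iff_forall_notMem.2
          intro x hx
          exact hcase (le_of_lt (lt_of_lt_of_le hx.2 (hpt x hx.1)))
        rw [hempty]
        have hwe : wSet w (∅ : Set (EuclideanSpace ℝ (Fin n))) = 0 := by
          rw [wSet, Measure.restrict_empty, lintegral_zero_measure]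
        rw [hwe, mul_zero]
        exact zero_le
    -- ## assemble
    calc ENNReal.ofReal γ * wSet w {x | x ∈ ball a r ∧ ENNReal.ofReal γ < HLMax f x}
        ≤ ENNReal.ofReal γ * (wSet w S₁ + wSet w S₂) := mul_le_mul_right hsplitset _
      _ = ENNReal.ofReal γ * wSet w S₁ + ENNReal.ofReal γ * wSet w S₂ := mul_add _ _ _
      _ ≤ ENNReal.ofReal D₁ * (wSet w (ball a r) * R) +
            ENNReal.ofReal (4*D₂) * (wSet w (ball a r) * R) := add_le_add hB1 hB2
      _ = (ENNReal.ofReal D₁ + ENNReal.ofReal (4*D₂)) * (wSet w (ball a r) * R) :=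
          (add_mul _ _ _).symm
      _ ≤ ENNReal.ofReal (D₁ + 4*D₂ + 1) * (wSet w (ball a r) * R) := by
          apply mul_le_mul_left
          rw [← ENNReal.ofReal_add hD₁pos.le (by positivity)]
          exact ENNReal.ofReal_le_ofReal (by linarith)
      _ = ENNReal.ofReal (D₁ + 4*D₂ + 1) * wSet w (ball a r) * R := (mul_assoc _ _ _).symm
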